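/- For all α, q ∈ (0, ∞), every t > 0 and every real sequence (a_n)_{n≥1} with a_n → 0 as n → ∞, one has lim_{ε ↓ 0} limsup_{n → ∞} ( (1/n) Σ_{i=k}^{⌊nt⌋} ‖ v_σ(i/n, ε + |a_n|) ‖_q^α ) = 0. -/

import Mathlib

open MeasureTheory Set Filter
open scoped ENNReal Topology

noncomputable section

/-- The modulus of continuity `v_σ(s, η)(ω) = sup{ |σ_s(ω) − σ_r(ω)| : r ∈ [s−η, s+η] }`
for `η ≥ 0`, and `0` for `η < 0`. -/
def modCont {Ω : Type*} (σ : ℝ → Ω → ℝ) (s η : ℝ) (ω : Ω) : ℝ :=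
  if 0 ≤ η then sSup ((fun r => |σ s ω - σ r ω|) '' Set.Icc (s - η) (s + η)) else 0

/-- `‖Y‖_q = E[|Y|^q]^{1/q}`. -/
def lqNorm {Ω : Type*} [MeasurableSpace Ω] (P : Measure Ω) (q : ℝ) (Y : Ω → ℝ) : ℝ :=
  (∫ ω, |Y ω| ^ q ∂P) ^ (1 / q)

/-- A path `f : ℝ → ℝ` is càdlàg: right-continuous with left limits. -/
def IsCadlag (f : ℝ → ℝ) : Prop :=
  (∀ s : ℝ, ContinuousWithinAt f (Set.Ici s) s) ∧
    (∀ s : ℝ, ∃ l : ℝ, Filter.Tendsto f (nhdsWithin s (Set.Iio s)) (nhds l))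

/-- A path `f : ℝ → ℝ` is càglàd: left-continuous with right limits. -/
def IsCaglad (f : ℝ → ℝ) : Prop :=
  (∀ s : ℝ, ContinuousWithinAt f (Set.Iic s) s) ∧
    (∀ s : ℝ, ∃ l : ℝ, Filter.Tendsto f (nhdsWithin s (Set.Ioi s)) (nhds l))

/-! ### Auxiliary lemmas -/

lemma osc_two_sided (f : ℝ → ℝ) (hpath : IsCadlag f ∨ IsCaglad f) (η : ℝ) (hη : 0 < η)
    (x : ℝ) :
    ∃ c d : ℝ, c < x ∧ x < d ∧
      (∀ y ∈ Set.Ioo c x, ∀ z ∈ Set.Ioo c x, |f y - f z| ≤ η) ∧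
      (∀ y ∈ Set.Ioo x d, ∀ z ∈ Set.Ioo x d, |f y - f z| ≤ η) := by
  have habs : ∀ (w u v : ℝ), |u - w| < η / 2 → |v - w| < η / 2 → |u - v| ≤ η := by
    intro w u v h1 h2
    calc |u - v| ≤ |u - w| + |w - v| := abs_sub_le u w v
      _ = |u - w| + |v - w| := by rw [abs_sub_comm w v]
      _ ≤ η := by linarith
  rcases hpath with ⟨hr, hl⟩ | ⟨hl, hr⟩
  · -- cadlag
    obtain ⟨d', hd', Hd⟩ := (Metric.continuousWithinAt_iff.1 (hr x)) (η / 2) (by linarith)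
    obtain ⟨l, hlx⟩ := hl x
    obtain ⟨c', hc', Hc⟩ := (Metric.tendsto_nhdsWithin_nhds.1 hlx) (η / 2) (by linarith)
    refine ⟨x - c', x + d', by linarith, by linarith, ?_, ?_⟩
    · intro y hy z hz
      have h1 : dist (f y) l < η / 2 := Hc hy.2 (by rw [Real.dist_eq]; rw [abs_lt]; constructor <;> [linarith [hy.1]; linarith [hy.2]])
      have h2 : dist (f z) l < η / 2 := Hc hz.2 (by rw [Real.dist_eq]; rw [abs_lt]; constructor <;> [linarith [hz.1]; linarith [hz.2]])
      rw [Real.dist_eq] at h1 h2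
      exact habs l (f y) (f z) h1 h2
    · intro y hy z hz
      have h1 : dist (f y) (f x) < η / 2 := Hd (le_of_lt hy.1) (by rw [Real.dist_eq, abs_lt]; constructor <;> [linarith [hy.1]; linarith [hy.2]])
      have h2 : dist (f z) (f x) < η / 2 := Hd (le_of_lt hz.1) (by rw [Real.dist_eq, abs_lt]; constructor <;> [linarith [hz.1]; linarith [hz.2]])
      rw [Real.dist_eq] at h1 h2
      exact habs (f x) (f y) (f z) h1 h2
  · -- caglad
    obtain ⟨c', hc', Hc⟩ := (Metric.continuousWithinAt_iff.1 (hl x)) (η / 2) (by linarith)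
    obtain ⟨l, hlx⟩ := hr x
    obtain ⟨d', hd', Hd⟩ := (Metric.tendsto_nhdsWithin_nhds.1 hlx) (η / 2) (by linarith)
    refine ⟨x - c', x + d', by linarith, by linarith, ?_, ?_⟩
    · intro y hy z hz
      have h1 : dist (f y) (f x) < η / 2 := Hc (le_of_lt hy.2) (by rw [Real.dist_eq, abs_lt]; constructor <;> [linarith [hy.1]; linarith [hy.2]])
      have h2 : dist (f z) (f x) < η / 2 := Hc (le_of_lt hz.2) (by rw [Real.dist_eq, abs_lt]; constructor <;> [linarith [hz.1]; linarith [hz.2]])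
      rw [Real.dist_eq] at h1 h2
      exact habs (f x) (f y) (f z) h1 h2
    · intro y hy z hz
      have h1 : dist (f y) l < η / 2 := Hd hy.1 (by rw [Real.dist_eq, abs_lt]; constructor <;> [linarith [hy.1]; linarith [hy.2]])
      have h2 : dist (f z) l < η / 2 := Hd hz.1 (by rw [Real.dist_eq, abs_lt]; constructor <;> [linarith [hz.1]; linarith [hz.2]])
      rw [Real.dist_eq] at h1 h2
      exact habs l (f y) (f z) h1 h2

lemma osc_cover (f : ℝ → ℝ) (hpath : IsCadlag f ∨ IsCaglad f) (η A B : ℝ) (hη : 0 < η) :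
    ∃ (F : Finset ℝ) (L : ℝ), 0 < L ∧ ∀ s r ρ : ℝ, s ∈ Set.Icc A B → 0 < ρ → ρ < L →
      (∀ x ∈ F, ρ < |s - x|) → |r - s| ≤ ρ → |f r - f s| ≤ η := by
  choose C D hC hD hoscL hoscR using osc_two_sided f hpath η hη
  have hcover : Set.Icc A B ⊆ ⋃ x : ℝ, Set.Ioo (C x) (D x) := by
    intro s _
    exact Set.mem_iUnion.2 ⟨s, hC s, hD s⟩
  obtain ⟨tF, htF⟩ := isCompact_Icc.elim_finite_subcover
    (fun x : ℝ => Set.Ioo (C x) (D x)) (fun _ => isOpen_Ioo) hcover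
  have hcov2 : Set.Icc A B ⊆ ⋃ i : tF, Set.Ioo (C i) (D i) := by
    intro s hs
    obtain ⟨x, hx⟩ := Set.mem_iUnion₂.1 (htF hs)
    exact Set.mem_iUnion.2 ⟨⟨x, hx.1⟩, hx.2⟩
  obtain ⟨L, hL, hball⟩ := lebesgue_number_lemma_of_metric isCompact_Icc
    (fun i : tF => isOpen_Ioo) hcov2
  refine ⟨tF, L, hL, ?_⟩
  intro s r ρ hs hρ hρL hF hr
  obtain ⟨⟨x, hx⟩, hsub⟩ := hball s hs
  have hsx : s ∈ Set.Ioo (C x) (D x) := hsub (Metric.mem_ball_self hL)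
  have hrx : r ∈ Set.Ioo (C x) (D x) := hsub (by
    rw [Metric.mem_ball, Real.dist_eq]; exact lt_of_le_of_lt hr hρL)
  have hxs := hF x hx
  have hr' := abs_le.1 hr
  rcases lt_abs.1 hxs with h | h
  · have h1 : x < r := by linarith [hr'.1]
    have h2 : x < s := by linarith
    exact hoscR x r ⟨h1, hrx.2⟩ s ⟨h2, hsx.2⟩
  · have h1 : r < x := by linarith [hr'.2]
    have h2 : s < x := by linarith
    exact hoscL x r ⟨hrx.1, h1⟩ s ⟨hsx.1, h2⟩

lemma modCont_bddAbove' {Ω : Type*} (σ : ℝ → Ω → ℝ) (M s η : ℝ) (hη : 0 ≤ η)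
    (hb : ∀ r ∈ Set.Icc (s - η) (s + η), ∀ ω : Ω, |σ r ω| ≤ M) (ω : Ω) :
    BddAbove ((fun r => |σ s ω - σ r ω|) '' Set.Icc (s - η) (s + η)) := by
  refine ⟨M + M, ?_⟩
  rintro y ⟨r, hr, rfl⟩
  have h1 : |σ s ω| ≤ M := hb s ⟨by linarith, by linarith⟩ ω
  have h2 : |σ r ω| ≤ M := hb r hr ω
  calc |σ s ω - σ r ω| ≤ |σ s ω| + |σ r ω| := abs_sub _ _
    _ ≤ M + M := by linarith

lemma modCont_mem_self {Ω : Type*} (σ : ℝ → Ω → ℝ) (s η : ℝ) (hη : 0 ≤ η) (ω : Ω) :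
    (0 : ℝ) ∈ (fun r => |σ s ω - σ r ω|) '' Set.Icc (s - η) (s + η) :=
  ⟨s, ⟨by linarith, by linarith⟩, by simp⟩

lemma modCont_nonneg {Ω : Type*} (σ : ℝ → Ω → ℝ) (M s η : ℝ) (hη : 0 ≤ η)
    (hb : ∀ r ∈ Set.Icc (s - η) (s + η), ∀ ω : Ω, |σ r ω| ≤ M) (ω : Ω) :
    0 ≤ modCont σ s η ω := by
  rw [modCont, if_pos hη]
  exact le_csSup (modCont_bddAbove' σ M s η hη hb ω) (modCont_mem_self σ s η hη ω)

lemma modCont_le_two_M {Ω : Type*} (σ : ℝ → Ω → ℝ) (M s η : ℝ) (hη : 0 ≤ η)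
    (hb : ∀ r ∈ Set.Icc (s - η) (s + η), ∀ ω : Ω, |σ r ω| ≤ M) (ω : Ω) :
    modCont σ s η ω ≤ M + M := by
  rw [modCont, if_pos hη]
  refine csSup_le ⟨0, modCont_mem_self σ s η hη ω⟩ ?_
  rintro y ⟨r, hr, rfl⟩
  have h1 : |σ s ω| ≤ M := hb s ⟨by linarith, by linarith⟩ ω
  have h2 : |σ r ω| ≤ M := hb r hr ω
  calc |σ s ω - σ r ω| ≤ |σ s ω| + |σ r ω| := abs_sub _ _
    _ ≤ M + M := by linarith

lemma modCont_mono' {Ω : Type*} (σ : ℝ → Ω → ℝ) (M s η : ℝ) {η' : ℝ} (hη : 0 ≤ η)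
    (hηη' : η ≤ η')
    (hb : ∀ r ∈ Set.Icc (s - η') (s + η'), ∀ ω : Ω, |σ r ω| ≤ M) (ω : Ω) :
    modCont σ s η ω ≤ modCont σ s η' ω := by
  rw [modCont, if_pos hη, modCont, if_pos (le_trans hη hηη')]
  refine csSup_le_csSup (modCont_bddAbove' σ M s η' (le_trans hη hηη') hb ω)
    ⟨0, modCont_mem_self σ s η hη ω⟩ ?_
  exact Set.image_mono (Set.Icc_subset_Icc (by linarith) (by linarith))

lemma modCont_le_of_osc {Ω : Type*} (σ : ℝ → Ω → ℝ) (s η : ℝ) (hη : 0 ≤ η) {c : ℝ} (ω : Ω)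
    (h : ∀ r : ℝ, |r - s| ≤ η → |σ r ω - σ s ω| ≤ c) :
    modCont σ s η ω ≤ c := by
  rw [modCont, if_pos hη]
  refine csSup_le ⟨0, modCont_mem_self σ s η hη ω⟩ ?_
  rintro y ⟨r, hr, rfl⟩
  simp only []
  rw [show |σ s ω - σ r ω| = |σ r ω - σ s ω| from abs_sub_comm _ _]
  exact h r (abs_le.2 ⟨by linarith [hr.1], by linarith [hr.2]⟩)

lemma modCont_measurable {Ω : Type*} [MeasurableSpace Ω] (σ : ℝ → Ω → ℝ)
    (hmeas : Measurable (Function.uncurry σ))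
    (hpaths : (∀ ω, IsCadlag (fun s => σ s ω)) ∨ (∀ ω, IsCaglad (fun s => σ s ω)))
    (M s η : ℝ) (hη : 0 ≤ η)
    (hb : ∀ r ∈ Set.Icc (s - η) (s + η), ∀ ω : Ω, |σ r ω| ≤ M) :
    Measurable (fun ω => modCont σ s η ω) := by
  classical
  set D : Set ℝ := insert (s - η) (insert (s + η)
    {r : ℝ | r ∈ Set.Icc (s - η) (s + η) ∧ ∃ p : ℚ, (p : ℝ) = r}) with hD
  have hDc : D.Countable := by
    refine Set.Countable.insert _ (Set.Countable.insert _ ?_)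
    refine (Set.countable_range ((↑) : ℚ → ℝ)).mono ?_
    rintro r ⟨-, p, rfl⟩
    exact ⟨p, rfl⟩
  have hDsub : D ⊆ Set.Icc (s - η) (s + η) := by
    rintro r (rfl | rfl | ⟨hr, -⟩)
    · exact ⟨le_refl _, by linarith⟩
    · exact ⟨by linarith, le_refl _⟩
    · exact hr
  have key : ∀ ω, modCont σ s η ω = sSup ((fun r => |σ s ω - σ r ω|) '' D) := by
    intro ω
    set g : ℝ → ℝ := fun r => |σ s ω - σ r ω| with hg
    have hbdd : BddAbove (g '' Set.Icc (s - η) (s + η)) := modCont_bddAbove' σ M s η hη hb ω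
    have hbddD : BddAbove (g '' D) := hbdd.mono (Set.image_mono hDsub)
    have hmem2 : s + η ∈ D := by simp [hD]
    have hmem1 : s - η ∈ D := by simp [hD]
    have hneD : (g '' D).Nonempty := ⟨g (s + η), Set.mem_image_of_mem g hmem2⟩
    have hne : (g '' Set.Icc (s - η) (s + η)).Nonempty :=
      ⟨g (s + η), Set.mem_image_of_mem g (hDsub hmem2)⟩
    rw [modCont, if_pos hη]
    refine le_antisymm (csSup_le hne ?_) (csSup_le_csSup hbdd hneD (Set.image_mono hDsub))
    rintro y ⟨r, hr, rfl⟩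
    rcases hpaths with hcad | hcag
    · rcases eq_or_lt_of_le hr.2 with heq | hlt
      · exact le_csSup hbddD (Set.mem_image_of_mem g (heq ▸ hmem2))
      · have hseq : ∀ j : ℕ, ∃ p : ℚ, r < (p : ℝ) ∧ (p : ℝ) < min (s + η) (r + 1 / ((j : ℝ) + 1)) := by
          intro j
          refine exists_rat_btwn (lt_min hlt ?_)
          have : (0 : ℝ) < 1 / ((j : ℝ) + 1) := by positivity
          linarith
        choose p hp1 hp2 using hseq
        have hmem : ∀ j, ((p j : ℝ)) ∈ D := by
          intro j
          refine Set.mem_insert_of_mem _ (Set.mem_insert_of_mem _ ⟨⟨?_, ?_⟩, ⟨p j, rfl⟩⟩)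
          · exact le_of_lt (lt_of_le_of_lt hr.1 (hp1 j))
          · exact le_of_lt (lt_of_lt_of_le (hp2 j) (min_le_left _ _))
        have h0 : Tendsto (fun j : ℕ => r + 1 / ((j : ℝ) + 1)) atTop (𝓝 r) := by
          simpa using (tendsto_const_nhds (x := r)).add tendsto_one_div_add_atTop_nhds_zero_nat
        have htend : Tendsto (fun j : ℕ => (p j : ℝ)) atTop (𝓝 r) :=
          tendsto_of_tendsto_of_tendsto_of_le_of_le tendsto_const_nhds h0
            (fun j => (hp1 j).le)
            (fun j => le_of_lt (lt_of_lt_of_le (hp2 j) (min_le_right _ _)))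
        have hcont : ContinuousWithinAt (fun u => σ u ω) (Set.Ici r) r := (hcad ω).1 r
        have hfp : Tendsto (fun j => σ ((p j : ℝ)) ω) atTop (𝓝 (σ r ω)) :=
          hcont.tendsto.comp (tendsto_nhdsWithin_iff.2
            ⟨htend, Eventually.of_forall fun j => le_of_lt (hp1 j)⟩)
        have habs : Tendsto (fun j => g ((p j : ℝ))) atTop (𝓝 (g r)) := by
          have hcont2 : Continuous fun u : ℝ => |σ s ω - u| :=
            (continuous_const.sub continuous_id).abs
          exact (hcont2.tendsto (σ r ω)).comp hfp
        exact le_of_tendsto habs (Eventually.of_forall fun j =>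
          le_csSup hbddD (Set.mem_image_of_mem g (hmem j)))
    · rcases eq_or_lt_of_le hr.1 with heq | hlt
      · exact le_csSup hbddD (Set.mem_image_of_mem g (heq ▸ hmem1))
      · have hseq : ∀ j : ℕ, ∃ p : ℚ, max (s - η) (r - 1 / ((j : ℝ) + 1)) < (p : ℝ) ∧ (p : ℝ) < r := by
          intro j
          refine exists_rat_btwn (max_lt hlt ?_)
          have : (0 : ℝ) < 1 / ((j : ℝ) + 1) := by positivity
          linarith
        choose p hp1 hp2 using hseq
        have hmem : ∀ j, ((p j : ℝ)) ∈ D := by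
          intro j
          refine Set.mem_insert_of_mem _ (Set.mem_insert_of_mem _ ⟨⟨?_, ?_⟩, ⟨p j, rfl⟩⟩)
          · exact le_of_lt (lt_of_le_of_lt (le_max_left _ _) (hp1 j))
          · exact le_of_lt (lt_of_lt_of_le (hp2 j) hr.2)
        have h0 : Tendsto (fun j : ℕ => r - 1 / ((j : ℝ) + 1)) atTop (𝓝 r) := by
          simpa using (tendsto_const_nhds (x := r)).sub tendsto_one_div_add_atTop_nhds_zero_nat
        have htend : Tendsto (fun j : ℕ => (p j : ℝ)) atTop (𝓝 r) :=
          tendsto_of_tendsto_of_tendsto_of_le_of_le h0 tendsto_const_nhds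
            (fun j => le_of_lt (lt_of_le_of_lt (le_max_right _ _) (hp1 j)))
            (fun j => (hp2 j).le)
        have hcont : ContinuousWithinAt (fun u => σ u ω) (Set.Iic r) r := (hcag ω).1 r
        have hfp : Tendsto (fun j => σ ((p j : ℝ)) ω) atTop (𝓝 (σ r ω)) :=
          hcont.tendsto.comp (tendsto_nhdsWithin_iff.2
            ⟨htend, Eventually.of_forall fun j => le_of_lt (hp2 j)⟩)
        have habs : Tendsto (fun j => g ((p j : ℝ))) atTop (𝓝 (g r)) := by
          have hcont2 : Continuous fun u : ℝ => |σ s ω - u| :=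
            (continuous_const.sub continuous_id).abs
          exact (hcont2.tendsto (σ r ω)).comp hfp
        exact le_of_tendsto habs (Eventually.of_forall fun j =>
          le_csSup hbddD (Set.mem_image_of_mem g (hmem j)))
  have heq : (fun ω => modCont σ s η ω) =
      fun ω => sSup ((fun r => |σ s ω - σ r ω|) '' D) := funext key
  rw [heq]
  refine Measurable.sSup hDc ?_
  intro r _
  exact ((hmeas.of_uncurry_left).sub (hmeas.of_uncurry_left)).abs

lemma count_close (n k m : ℕ) (hn : 1 ≤ n) (x ρ : ℝ) (hρ : 0 ≤ ρ) :
    (((Finset.Icc k m).filter (fun i : ℕ => |((i : ℝ) / n) - x| ≤ ρ)).card : ℝ) ≤ 2 * ρ * n + 1 := by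
  classical
  set T := (Finset.Icc k m).filter (fun i : ℕ => |((i : ℝ) / n) - x| ≤ ρ) with hT
  rcases T.eq_empty_or_nonempty with h | h
  · rw [h]; simp; positivity
  · set i₀ := T.min' h with hi₀
    have hi₀T : i₀ ∈ T := T.min'_mem h
    have hnpos : (0 : ℝ) < n := by exact_mod_cast hn
    have hsub : T ⊆ Finset.Icc i₀ (i₀ + ⌊2 * ρ * n⌋₊) := by
      intro i hi
      rw [Finset.mem_Icc]
      refine ⟨T.min'_le i hi, ?_⟩
      have h1 : |((i : ℝ) / n) - x| ≤ ρ := (Finset.mem_filter.1 hi).2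
      have h2 : |((i₀ : ℝ) / n) - x| ≤ ρ := (Finset.mem_filter.1 hi₀T).2
      have h1' := abs_le.1 h1
      have h2' := abs_le.1 h2
      have hle : (i : ℝ) - i₀ ≤ 2 * ρ * n := by
        have hd : (i : ℝ) / n - (i₀ : ℝ) / n ≤ 2 * ρ := by linarith
        rw [div_sub_div_same] at hd
        calc (i : ℝ) - i₀ = ((i : ℝ) - i₀) / n * n := by field_simp
          _ ≤ 2 * ρ * n := by
            apply mul_le_mul_of_nonneg_right hd (le_of_lt hnpos)
      have hii₀ : i₀ ≤ i := T.min'_le i hi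
      have hcast : ((i - i₀ : ℕ) : ℝ) ≤ 2 * ρ * n := by
        rw [Nat.cast_sub hii₀]; exact hle
      have := Nat.le_floor hcast
      omega
    calc (T.card : ℝ) ≤ ((Finset.Icc i₀ (i₀ + ⌊2 * ρ * n⌋₊)).card : ℝ) := by
          exact_mod_cast Finset.card_le_card hsub
      _ = (⌊2 * ρ * n⌋₊ : ℝ) + 1 := by
          rw [Nat.card_Icc]
          have : i₀ + ⌊2 * ρ * n⌋₊ + 1 - i₀ = ⌊2 * ρ * n⌋₊ + 1 := by omega
          rw [this]; push_cast; ring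
      _ ≤ 2 * ρ * n + 1 := by
          have := Nat.floor_le (by positivity : (0:ℝ) ≤ 2 * ρ * n)
          linarith

lemma rpow_le_aux {β τ B x : ℝ} (hβ : 0 < β) (hτ : 0 < τ) (hx : 0 ≤ x) (hxB : x ≤ B) :
    x ^ β ≤ τ ^ β + max (τ ^ (β - 1)) (B ^ (β - 1)) * x := by
  have hK : 0 ≤ max (τ ^ (β - 1)) (B ^ (β - 1)) :=
    le_max_of_le_left (le_of_lt (Real.rpow_pos_of_pos hτ _))
  rcases le_or_gt x τ with h | h
  · have h1 : x ^ β ≤ τ ^ β := Real.rpow_le_rpow hx h hβ.le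
    nlinarith [mul_nonneg hK hx]
  · have hxpos : 0 < x := lt_trans hτ h
    have h1 : x ^ β = x ^ (β - 1) * x := by
      rw [← Real.rpow_add_one hxpos.ne' (β - 1)]; ring_nf
    have h2 : x ^ (β - 1) ≤ max (τ ^ (β - 1)) (B ^ (β - 1)) := by
      rcases le_or_gt β 1 with hβ1 | hβ1
      · refine le_max_of_le_left ?_
        exact Real.rpow_le_rpow_of_nonpos hτ h.le (by linarith)
      · refine le_max_of_le_right ?_
        exact Real.rpow_le_rpow hxpos.le hxB (by linarith)
    have h3 : x ^ (β - 1) * x ≤ max (τ ^ (β - 1)) (B ^ (β - 1)) * x :=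
      mul_le_mul_of_nonneg_right h2 hxpos.le
    have h4 : 0 ≤ τ ^ β := le_of_lt (Real.rpow_pos_of_pos hτ _)
    linarith [h1 ▸ h3]

set_option maxHeartbeats 2000000 in
/-- Lemma 4.9: the averaged moduli of continuity of a bounded càdlàg (or càglàd) process
vanish in the double limit. -/
theorem stmt_9
    {Ω : Type*} [MeasurableSpace Ω] (P : Measure Ω) [IsProbabilityMeasure P]
    (δ : ℝ) (hδ : 0 < δ) (k : ℕ) (hk : 1 ≤ k)
    (σ : ℝ → Ω → ℝ)
    (hmeas : Measurable (Function.uncurry σ))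
    (hpaths : (∀ ω, IsCadlag (fun s => σ s ω)) ∨ (∀ ω, IsCaglad (fun s => σ s ω)))
    (M : ℝ) (hM : 0 < M)
    (hbound : ∀ s ∈ Set.Ici (-δ), ∀ ω, |σ s ω| ≤ M)
    (α q t : ℝ) (hα : 0 < α) (hq : 0 < q) (ht : 0 < t)
    (a : ℕ → ℝ) (ha : Filter.Tendsto a Filter.atTop (nhds 0)) :
    Filter.Tendsto
      (fun ε : ℝ => Filter.limsup
        (fun n : ℕ => (1 / (n : ℝ)) *
          ∑ i ∈ Finset.Icc k (Nat.floor ((n : ℝ) * t)),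
            (lqNorm P q (modCont σ ((i : ℝ) / n) (ε + |a n|))) ^ α)
        Filter.atTop)
      (nhdsWithin 0 (Set.Ioi 0)) (nhds 0) := by
  classical
  have hM2 : (0:ℝ) < M + M := by linarith
  have ht1 : (0:ℝ) < t + 1 := by linarith
  -- bound transfer
  have hb : ∀ s η : ℝ, 0 ≤ s → η ≤ δ →
      ∀ r ∈ Set.Icc (s - η) (s + η), ∀ ω, |σ r ω| ≤ M := by
    intro s η hs hηδ r hr ω
    refine hbound r ?_ ω
    rw [Set.mem_Ici]
    linarith [hr.1]
  have hs0 : ∀ (n i : ℕ), (0:ℝ) ≤ (i:ℝ)/n := fun n i => by positivity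
  have mc_meas : ∀ (η : ℝ), 0 ≤ η → η ≤ δ → ∀ n i : ℕ,
      Measurable (fun ω => modCont σ ((i:ℝ)/n) η ω) := fun η h0 hδ' n i =>
    modCont_measurable σ hmeas hpaths M _ η h0 (hb _ _ (hs0 n i) hδ')
  have mc_nonneg : ∀ (η : ℝ), 0 ≤ η → η ≤ δ → ∀ (n i : ℕ), ∀ ω,
      0 ≤ modCont σ ((i:ℝ)/n) η ω := fun η h0 hδ' n i ω =>
    modCont_nonneg σ M _ η h0 (hb _ _ (hs0 n i) hδ') ω
  have mc_le : ∀ (η : ℝ), 0 ≤ η → η ≤ δ → ∀ (n i : ℕ), ∀ ω,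
      modCont σ ((i:ℝ)/n) η ω ≤ M + M := fun η h0 hδ' n i ω =>
    modCont_le_two_M σ M _ η h0 (hb _ _ (hs0 n i) hδ') ω
  have mc_mono : ∀ (η η' : ℝ), 0 ≤ η → η ≤ η' → η' ≤ δ → ∀ (n i : ℕ), ∀ ω,
      modCont σ ((i:ℝ)/n) η ω ≤ modCont σ ((i:ℝ)/n) η' ω := fun η η' h0 h1 hδ' n i ω =>
    modCont_mono' σ M _ η h0 h1 (hb _ _ (hs0 n i) hδ') ω
  set Sr : ℝ → ℕ → Ω → ℝ := fun ε n ω =>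
    (1/(n:ℝ)) * ∑ i ∈ Finset.Icc k (Nat.floor ((n:ℝ)*t)),
      (modCont σ ((i:ℝ)/n) (2*ε) ω) ^ q with hSrdef
  set Fn : ℝ → ℕ → Ω → ℝ≥0∞ := fun ε n ω => ENNReal.ofReal (Sr ε n ω) with hFndef
  set G : ℝ → Ω → ℝ≥0∞ := fun ε ω => limsup (fun n => Fn ε n ω) atTop with hGdef
  have hcard : ∀ n : ℕ, 1 ≤ n →
      (1/(n:ℝ)) * ((Finset.Icc k (Nat.floor ((n:ℝ)*t))).card : ℝ) ≤ t + 1 := by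
    intro n hn
    have hn' : (1:ℝ) ≤ n := by exact_mod_cast hn
    have h1 : (Finset.Icc k (Nat.floor ((n:ℝ)*t))).card ≤ Nat.floor ((n:ℝ)*t) + 1 := by
      rw [Nat.card_Icc]; omega
    have h2 : ((Nat.floor ((n:ℝ)*t)):ℝ) ≤ (n:ℝ)*t := Nat.floor_le (by positivity)
    have h3 : ((Finset.Icc k (Nat.floor ((n:ℝ)*t))).card : ℝ) ≤ (n:ℝ)*t + 1 := by
      calc ((Finset.Icc k (Nat.floor ((n:ℝ)*t))).card : ℝ)
          ≤ ((Nat.floor ((n:ℝ)*t)):ℝ) + 1 := by exact_mod_cast h1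
        _ ≤ (n:ℝ)*t + 1 := by linarith
    rw [div_mul_eq_mul_div, one_mul, div_le_iff₀ (by linarith : (0:ℝ) < n)]
    nlinarith
  have hSr_nonneg : ∀ ε : ℝ, 0 ≤ ε → 2*ε ≤ δ → ∀ (n : ℕ), ∀ ω, 0 ≤ Sr ε n ω := by
    intro ε hε h2δ n ω
    simp only [hSrdef]
    apply mul_nonneg (by positivity)
    exact Finset.sum_nonneg fun i _ =>
      Real.rpow_nonneg (mc_nonneg (2*ε) (by linarith) h2δ n i ω) q
  have hSr_le : ∀ ε : ℝ, 0 ≤ ε → 2*ε ≤ δ → ∀ (n : ℕ), ∀ ω,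
      Sr ε n ω ≤ (t+1) * (M+M)^q := by
    intro ε hε h2δ n ω
    have hMq : (0:ℝ) ≤ (M+M)^q := (Real.rpow_pos_of_pos hM2 q).le
    rcases Nat.eq_zero_or_pos n with rfl | hn
    · simp only [hSrdef, Nat.cast_zero, div_zero]
      simp
      positivity
    · have hsum : ∑ i ∈ Finset.Icc k (Nat.floor ((n:ℝ)*t)),
          (modCont σ ((i:ℝ)/n) (2*ε) ω) ^ q
          ≤ ((Finset.Icc k (Nat.floor ((n:ℝ)*t))).card : ℝ) * (M+M)^q := by
        have := Finset.sum_le_card_nsmul (Finset.Icc k (Nat.floor ((n:ℝ)*t)))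
          (fun i => (modCont σ ((i:ℝ)/n) (2*ε) ω) ^ q) ((M+M)^q)
          (fun i _ => Real.rpow_le_rpow (mc_nonneg (2*ε) (by linarith) h2δ n i ω)
            (mc_le (2*ε) (by linarith) h2δ n i ω) hq.le)
        rwa [nsmul_eq_mul] at this
      simp only [hSrdef]
      calc (1/(n:ℝ)) * ∑ i ∈ Finset.Icc k (Nat.floor ((n:ℝ)*t)),
            (modCont σ ((i:ℝ)/n) (2*ε) ω) ^ q
          ≤ (1/(n:ℝ)) * (((Finset.Icc k (Nat.floor ((n:ℝ)*t))).card : ℝ) * (M+M)^q) :=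
            mul_le_mul_of_nonneg_left hsum (by positivity)
        _ = ((1/(n:ℝ)) * ((Finset.Icc k (Nat.floor ((n:ℝ)*t))).card : ℝ)) * (M+M)^q := by ring
        _ ≤ (t+1) * (M+M)^q := mul_le_mul_of_nonneg_right (hcard n hn) hMq
  have hSr_meas : ∀ ε : ℝ, 0 ≤ ε → 2*ε ≤ δ → ∀ n : ℕ, Measurable (Sr ε n) := by
    intro ε hε h2δ n
    simp only [hSrdef]
    exact measurable_const.mul (Finset.measurable_sum _ fun i _ =>
      (mc_meas (2*ε) (by linarith) h2δ n i).pow measurable_const)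
  have hFn_meas : ∀ ε : ℝ, 0 ≤ ε → 2*ε ≤ δ → ∀ n : ℕ, Measurable (Fn ε n) := by
    intro ε hε h2δ n
    exact (hSr_meas ε hε h2δ n).ennreal_ofReal
  have hFn_bound : ∀ ε : ℝ, 0 ≤ ε → 2*ε ≤ δ → ∀ (n : ℕ), ∀ ω,
      Fn ε n ω ≤ ENNReal.ofReal ((t+1)*(M+M)^q) := fun ε hε h2δ n ω =>
    ENNReal.ofReal_le_ofReal (hSr_le ε hε h2δ n ω)
  have hG_bound : ∀ ε : ℝ, 0 ≤ ε → 2*ε ≤ δ → ∀ ω,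
      G ε ω ≤ ENNReal.ofReal ((t+1)*(M+M)^q) := by
    intro ε hε h2δ ω
    exact limsup_le_of_le (h := Eventually.of_forall fun n => hFn_bound ε hε h2δ n ω)
  have hG_meas : ∀ ε : ℝ, 0 ≤ ε → 2*ε ≤ δ → Measurable (G ε) := by
    intro ε hε h2δ
    exact Measurable.limsup (fun n => hFn_meas ε hε h2δ n)
  have hG_mono : ∀ ε ε' : ℝ, 0 ≤ ε → ε ≤ ε' → 2*ε' ≤ δ → ∀ ω, G ε ω ≤ G ε' ω := by
    intro ε ε' hε hεε' h2δ ω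
    refine limsup_le_limsup (Eventually.of_forall fun n => ?_)
    refine ENNReal.ofReal_le_ofReal ?_
    simp only [hSrdef]
    refine mul_le_mul_of_nonneg_left (Finset.sum_le_sum fun i _ => ?_) (by positivity)
    exact Real.rpow_le_rpow (mc_nonneg (2*ε) (by linarith) (by linarith) n i ω)
      (mc_mono (2*ε) (2*ε') (by linarith) (by linarith) h2δ n i ω) hq.le
  -- pathwise bound via the covering lemma
  have hpathwise : ∀ ω, ∀ η : ℝ, 0 < η → ∃ (Fs : Finset ℝ) (L : ℝ), 0 < L ∧
      ∀ ε : ℝ, 0 < ε → 2*ε ≤ δ → 2*ε < L →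
        G ε ω ≤ ENNReal.ofReal ((t+1)*η^q + ((Fs.card:ℝ) * (5*ε))*(M+M)^q) := by
    intro ω η hη
    have hpath1 : IsCadlag (fun s => σ s ω) ∨ IsCaglad (fun s => σ s ω) := by
      rcases hpaths with h | h
      · exact Or.inl (h ω)
      · exact Or.inr (h ω)
    obtain ⟨Fs, L, hL, HQ⟩ := osc_cover (fun s => σ s ω) hpath1 η 0 t hη
    refine ⟨Fs, L, hL, ?_⟩
    intro ε hε h2δ h2L
    have hbig : ∀ n : ℕ, 1 ≤ n → 1 ≤ ε * n →
        Sr ε n ω ≤ (t+1)*η^q + ((Fs.card:ℝ) * (5*ε))*(M+M)^q := by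
      intro n hn1 hεn
      have hnR : (1:ℝ) ≤ n := by exact_mod_cast hn1
      have hnpos : (0:ℝ) < n := by linarith
      have hMq : (0:ℝ) ≤ (M+M)^q := (Real.rpow_pos_of_pos hM2 q).le
      set I := Finset.Icc k (Nat.floor ((n:ℝ)*t)) with hIdef
      set Pbad : ℕ → Prop := fun i => ∃ x ∈ Fs, |(i:ℝ)/n - x| ≤ 2*ε with hPbaddef
      have hgood : ∀ i ∈ I.filter (fun i => ¬ Pbad i),
          (modCont σ ((i:ℝ)/n) (2*ε) ω)^q ≤ η^q := by
        intro i hi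
        obtain ⟨hiI, hnot⟩ := Finset.mem_filter.1 hi
        simp only [hPbaddef] at hnot
        push_neg at hnot
        have hit : (i:ℝ)/n ≤ t := by
          have h5 := (Finset.mem_Icc.1 hiI).2
          have h6 : (i:ℝ) ≤ ((Nat.floor ((n:ℝ)*t)):ℝ) := by exact_mod_cast h5
          have h7 : ((Nat.floor ((n:ℝ)*t)):ℝ) ≤ (n:ℝ)*t := Nat.floor_le (by positivity)
          rw [div_le_iff₀ hnpos]; linarith
        have hmc : modCont σ ((i:ℝ)/n) (2*ε) ω ≤ η := by
          refine modCont_le_of_osc σ _ _ (by linarith) ω ?_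
          intro r hr
          exact HQ ((i:ℝ)/n) r (2*ε) ⟨hs0 n i, hit⟩ (by linarith) h2L
            (fun x hx => hnot x hx) hr
        exact Real.rpow_le_rpow (mc_nonneg (2*ε) (by linarith) h2δ n i ω) hmc hq.le
      have hbadcard : ((I.filter Pbad).card : ℝ) ≤ (Fs.card : ℝ) * (5 * ε * n) := by
        have hsub : I.filter Pbad ⊆
            Fs.biUnion (fun x => I.filter (fun i : ℕ => |(i:ℝ)/n - x| ≤ 2*ε)) := by
          intro i hi
          obtain ⟨hiI, x, hx, hxd⟩ := Finset.mem_filter.1 hi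
          exact Finset.mem_biUnion.2 ⟨x, hx, Finset.mem_filter.2 ⟨hiI, hxd⟩⟩
        have h1 : (I.filter Pbad).card ≤
            ∑ x ∈ Fs, (I.filter (fun i : ℕ => |(i:ℝ)/n - x| ≤ 2*ε)).card :=
          le_trans (Finset.card_le_card hsub) Finset.card_biUnion_le
        have h2 : ∀ x ∈ Fs,
            ((I.filter (fun i : ℕ => |(i:ℝ)/n - x| ≤ 2*ε)).card : ℝ) ≤ 2*(2*ε)*n + 1 :=
          fun x _ => count_close n k _ hn1 x (2*ε) (by linarith)
        calc ((I.filter Pbad).card : ℝ)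
            ≤ ∑ x ∈ Fs, ((I.filter (fun i : ℕ => |(i:ℝ)/n - x| ≤ 2*ε)).card : ℝ) := by
              exact_mod_cast h1
          _ ≤ ∑ _x ∈ Fs, (2*(2*ε)*(n:ℝ) + 1) := Finset.sum_le_sum h2
          _ = (Fs.card : ℝ) * (4*ε*n + 1) := by
              rw [Finset.sum_const, nsmul_eq_mul]; ring
          _ ≤ (Fs.card : ℝ) * (5*ε*n) := by
              refine mul_le_mul_of_nonneg_left ?_ (by positivity)
              ring_nf
              ring_nf at hεn
              linarith
      have hbadsum : ∑ i ∈ I.filter Pbad, (modCont σ ((i:ℝ)/n) (2*ε) ω)^q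
          ≤ ((I.filter Pbad).card : ℝ) * (M+M)^q := by
        have := Finset.sum_le_card_nsmul (I.filter Pbad)
          (fun i => (modCont σ ((i:ℝ)/n) (2*ε) ω) ^ q) ((M+M)^q)
          (fun i _ => Real.rpow_le_rpow (mc_nonneg (2*ε) (by linarith) h2δ n i ω)
            (mc_le (2*ε) (by linarith) h2δ n i ω) hq.le)
        rwa [nsmul_eq_mul] at this
      have hgoodsum : ∑ i ∈ I.filter (fun i => ¬ Pbad i), (modCont σ ((i:ℝ)/n) (2*ε) ω)^q
          ≤ (I.card : ℝ) * η^q := by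
        have h1 := Finset.sum_le_card_nsmul (I.filter (fun i => ¬ Pbad i))
          (fun i => (modCont σ ((i:ℝ)/n) (2*ε) ω) ^ q) (η^q) hgood
        rw [nsmul_eq_mul] at h1
        refine le_trans h1 ?_
        refine mul_le_mul_of_nonneg_right ?_ (Real.rpow_nonneg hη.le q)
        exact_mod_cast Finset.card_filter_le I _
      have hsplit : ∑ i ∈ I, (modCont σ ((i:ℝ)/n) (2*ε) ω)^q
          = ∑ i ∈ I.filter Pbad, (modCont σ ((i:ℝ)/n) (2*ε) ω)^q
            + ∑ i ∈ I.filter (fun i => ¬ Pbad i), (modCont σ ((i:ℝ)/n) (2*ε) ω)^q :=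
        (Finset.sum_filter_add_sum_filter_not I Pbad _).symm
      have hA : (1/(n:ℝ)) * (((I.filter Pbad).card:ℝ) * (M+M)^q)
          ≤ ((Fs.card:ℝ)*(5*ε))*(M+M)^q := by
        have h1 : (1/(n:ℝ)) * ((I.filter Pbad).card:ℝ) ≤ (Fs.card:ℝ) * (5*ε) := by
          rw [div_mul_eq_mul_div, one_mul, div_le_iff₀ hnpos]
          ring_nf
          ring_nf at hbadcard
          linarith
        calc (1/(n:ℝ)) * (((I.filter Pbad).card:ℝ) * (M+M)^q)
            = ((1/(n:ℝ)) * ((I.filter Pbad).card:ℝ)) * (M+M)^q := by ring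
          _ ≤ ((Fs.card:ℝ)*(5*ε))*(M+M)^q := mul_le_mul_of_nonneg_right h1 hMq
      have hB : (1/(n:ℝ)) * ((I.card:ℝ) * η^q) ≤ (t+1)*η^q := by
        calc (1/(n:ℝ)) * ((I.card:ℝ) * η^q) = ((1/(n:ℝ)) * (I.card:ℝ)) * η^q := by ring
          _ ≤ (t+1)*η^q :=
            mul_le_mul_of_nonneg_right (hcard n hn1) (Real.rpow_nonneg hη.le q)
      simp only [hSrdef]
      calc (1/(n:ℝ)) * ∑ i ∈ Finset.Icc k (Nat.floor ((n:ℝ)*t)),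
            (modCont σ ((i:ℝ)/n) (2*ε) ω) ^ q
          = (1/(n:ℝ)) * (∑ i ∈ I.filter Pbad, (modCont σ ((i:ℝ)/n) (2*ε) ω)^q
            + ∑ i ∈ I.filter (fun i => ¬ Pbad i), (modCont σ ((i:ℝ)/n) (2*ε) ω)^q) := by
            rw [← hsplit]
        _ ≤ (1/(n:ℝ)) * (((I.filter Pbad).card:ℝ) * (M+M)^q + (I.card:ℝ) * η^q) :=
            mul_le_mul_of_nonneg_left (add_le_add hbadsum hgoodsum) (by positivity)
        _ = (1/(n:ℝ)) * (((I.filter Pbad).card:ℝ) * (M+M)^q)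
            + (1/(n:ℝ)) * ((I.card:ℝ) * η^q) := by ring
        _ ≤ ((Fs.card:ℝ)*(5*ε))*(M+M)^q + (t+1)*η^q := add_le_add hA hB
        _ = (t+1)*η^q + ((Fs.card:ℝ)*(5*ε))*(M+M)^q := by ring
    have hev : ∀ᶠ n : ℕ in atTop,
        Fn ε n ω ≤ ENNReal.ofReal ((t+1)*η^q + ((Fs.card:ℝ)*(5*ε))*(M+M)^q) := by
      have h1 : ∀ᶠ n : ℕ in atTop, 1 ≤ ε * n := by
        obtain ⟨N, hN⟩ := exists_nat_gt (1/ε)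
        filter_upwards [eventually_ge_atTop N] with n hn
        have h2 : (1/ε : ℝ) < n := lt_of_lt_of_le hN (by exact_mod_cast hn)
        rw [div_lt_iff₀ hε] at h2
        nlinarith
      filter_upwards [h1, eventually_ge_atTop 1] with n h1n hn1
      exact ENNReal.ofReal_le_ofReal (hbig n hn1 h1n)
    exact limsup_le_of_le (h := hev)
  -- the vanishing sequence of ε's
  set εseq : ℕ → ℝ := fun j => (δ/2)/((j:ℝ)+1) with hεseqdef
  have hεpos : ∀ j, 0 < εseq j := by
    intro j
    apply div_pos (by linarith)
    positivity
  have hεle : ∀ j, εseq j ≤ δ/2 := by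
    intro j
    apply div_le_self (by linarith)
    simp only [le_add_iff_nonneg_left]
    positivity
  have h2εδ : ∀ j, 2 * εseq j ≤ δ := fun j => by have := hεle j; linarith
  have hεanti : ∀ j j' : ℕ, j ≤ j' → εseq j' ≤ εseq j := by
    intro j j' h
    apply div_le_div_of_nonneg_left (by linarith) (by positivity)
    have : (j:ℝ) ≤ (j':ℝ) := by exact_mod_cast h
    linarith
  have hεtend : Tendsto εseq atTop (𝓝 0) := by
    have h := tendsto_one_div_add_atTop_nhds_zero_nat.const_mul (δ/2)
    rw [mul_zero] at h
    simpa [hεseqdef, mul_one_div, div_eq_mul_inv] using h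
  -- pointwise vanishing of G along εseq
  have hiInf : ∀ ω, (⨅ j, G (εseq j) ω) = 0 := by
    intro ω
    refine le_antisymm ?_ zero_le
    refine ENNReal.le_of_forall_pos_le_add (fun c hc _ => ?_)
    rw [zero_add]
    have hcr : (0:ℝ) < (c:ℝ) := by exact_mod_cast hc
    have hx : (0:ℝ) < (c:ℝ)/(2*(t+1)) := by positivity
    set η := ((c:ℝ)/(2*(t+1))) ^ (1/q) with hηdef
    have hηpos : 0 < η := Real.rpow_pos_of_pos hx _
    have hηq : η ^ q = (c:ℝ)/(2*(t+1)) := by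
      rw [hηdef, ← Real.rpow_mul hx.le, one_div_mul_cancel hq.ne', Real.rpow_one]
    obtain ⟨Fs, L, hL, HB⟩ := hpathwise ω η hηpos
    have hMq : (0:ℝ) < (M+M)^q := Real.rpow_pos_of_pos hM2 q
    have hb0 : (0:ℝ) < min (L/2) ((c:ℝ)/(2*(5*(Fs.card:ℝ)*(M+M)^q + 1))) := by
      refine lt_min (by linarith) ?_
      positivity
    obtain ⟨j, hj⟩ := ((tendsto_order.1 hεtend).2 _ hb0).exists
    have hjL : 2 * εseq j < L := by
      have := lt_of_lt_of_le hj (min_le_left _ _)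
      linarith
    have hjc : ((Fs.card:ℝ) * (5 * εseq j)) * (M+M)^q ≤ (c:ℝ)/2 := by
      have h1 := lt_of_lt_of_le hj (min_le_right _ _)
      have h2 : (0:ℝ) < 2*(5*(Fs.card:ℝ)*(M+M)^q + 1) := by positivity
      rw [lt_div_iff₀ h2] at h1
      have h3 : (0:ℝ) ≤ (Fs.card:ℝ) := by positivity
      nlinarith [hεpos j]
    have hval : (t+1)*η^q + ((Fs.card:ℝ)*(5*εseq j))*(M+M)^q ≤ (c:ℝ) := by
      rw [hηq]
      have h4 : (t+1)*((c:ℝ)/(2*(t+1))) = (c:ℝ)/2 := by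
        field_simp
      linarith
    calc (⨅ j', G (εseq j') ω) ≤ G (εseq j) ω := iInf_le _ j
      _ ≤ ENNReal.ofReal ((t+1)*η^q + ((Fs.card:ℝ)*(5*εseq j))*(M+M)^q) :=
          HB _ (hεpos j) (h2εδ j) hjL
      _ ≤ ENNReal.ofReal (c:ℝ) := ENNReal.ofReal_le_ofReal hval
      _ = (c : ℝ≥0∞) := ENNReal.ofReal_coe_nnreal
  -- integrals vanish along εseq
  have hGj_meas : ∀ j : ℕ, Measurable (G (εseq j)) := fun j =>
    hG_meas _ (hεpos j).le (h2εδ j)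
  have hGj_anti : Antitone (fun j : ℕ => G (εseq j)) := by
    intro j j' hjj' ω
    exact hG_mono _ _ (hεpos j').le (hεanti j j' hjj') (h2εδ j) ω
  have hfin : (∫⁻ ω, G (εseq 0) ω ∂P) ≠ ∞ := by
    refine ne_of_lt (lt_of_le_of_lt
      (lintegral_mono (fun ω => hG_bound _ (hεpos 0).le (h2εδ 0) ω)) ?_)
    rw [lintegral_const]
    simp only [measure_univ, mul_one]
    exact ENNReal.ofReal_lt_top
  have hiInf_int := MeasureTheory.lintegral_iInf hGj_meas hGj_anti hfin
  have hzero : (⨅ j : ℕ, ∫⁻ ω, G (εseq j) ω ∂P) = 0 := by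
    rw [← hiInf_int]
    calc ∫⁻ ω, ⨅ j, G (εseq j) ω ∂P = ∫⁻ _ω, (0:ℝ≥0∞) ∂P := lintegral_congr hiInf
      _ = 0 := lintegral_zero
  have hlint : Tendsto (fun j : ℕ => ∫⁻ ω, G (εseq j) ω ∂P) atTop (𝓝 0) := by
    have hanti2 : Antitone (fun j : ℕ => ∫⁻ ω, G (εseq j) ω ∂P) := fun j j' h =>
      lintegral_mono (hGj_anti h)
    have h := tendsto_atTop_iInf hanti2
    rwa [hzero] at h
  -- final assembly
  rw [Metric.tendsto_nhdsWithin_nhds]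
  intro c hc
  set β := α / q with hβdef
  have hβ : 0 < β := div_pos hα hq
  set B' := (M+M)^q with hB'def
  have hB' : 0 < B' := Real.rpow_pos_of_pos hM2 q
  have hct : (0:ℝ) < c/(4*(t+1)) := by positivity
  set τ := (c/(4*(t+1))) ^ (1/β) with hτdef
  have hτ : 0 < τ := Real.rpow_pos_of_pos hct _
  have hτβ : τ ^ β = c/(4*(t+1)) := by
    rw [hτdef, ← Real.rpow_mul hct.le, one_div_mul_cancel hβ.ne', Real.rpow_one]
  set K := max (τ ^ (β-1)) (B' ^ (β-1)) with hKdef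
  have hK : 0 < K := lt_max_of_lt_left (Real.rpow_pos_of_pos hτ _)
  have hc4K : (0:ℝ) < c/(4*K) := div_pos hc (by positivity)
  obtain ⟨j₀, hj₀⟩ := ((tendsto_order.1 hlint).2 (ENNReal.ofReal (c/(4*K)))
    (ENNReal.ofReal_pos.2 hc4K)).exists
  refine ⟨εseq j₀, hεpos j₀, ?_⟩
  intro ε hεIoi hdist
  have hε : 0 < ε := hεIoi
  rw [Real.dist_eq, sub_zero, abs_of_pos hε] at hdist
  have h2εδ' : 2*ε ≤ δ := by have := hεle j₀; linarith
  have hrev : limsup (fun n => ∫⁻ ω, Fn ε n ω ∂P) atTop ≤ ∫⁻ ω, G ε ω ∂P := by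
    refine limsup_lintegral_le (fun _ => ENNReal.ofReal ((t+1)*(M+M)^q))
      (fun n => hFn_meas ε hε.le h2εδ' n)
      (fun n => ae_of_all _ (fun ω => hFn_bound ε hε.le h2εδ' n ω)) ?_
    rw [lintegral_const]
    simp only [measure_univ, mul_one]
    exact ENNReal.ofReal_ne_top
  have hImono : ∫⁻ ω, G ε ω ∂P ≤ ∫⁻ ω, G (εseq j₀) ω ∂P :=
    lintegral_mono (fun ω => hG_mono ε (εseq j₀) hε.le hdist.le (h2εδ j₀) ω)
  have hlim2 : limsup (fun n => ∫⁻ ω, Fn ε n ω ∂P) atTop < ENNReal.ofReal (c/(4*K)) :=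
    lt_of_le_of_lt (le_trans hrev hImono) hj₀
  have hev1 := eventually_lt_of_limsup_lt hlim2
  have hev2 : ∀ᶠ n : ℕ in atTop, |a n| ≤ ε := by
    have h := Metric.tendsto_nhds.1 ha ε hε
    filter_upwards [h] with n hn
    rw [Real.dist_eq, sub_zero] at hn
    exact hn.le
  have hu_nonneg : ∀ n : ℕ, 0 ≤ (1/(n:ℝ)) *
      ∑ i ∈ Finset.Icc k (Nat.floor ((n:ℝ)*t)),
        (lqNorm P q (modCont σ ((i:ℝ)/n) (ε + |a n|))) ^ α := by
    intro n
    apply mul_nonneg (by positivity)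
    refine Finset.sum_nonneg fun i _ => ?_
    apply Real.rpow_nonneg
    apply Real.rpow_nonneg
    exact integral_nonneg fun ω => Real.rpow_nonneg (abs_nonneg _) q
  -- the per-n chain
  have hchain : ∀ n : ℕ, 1 ≤ n → |a n| ≤ ε →
      (∫⁻ ω, Fn ε n ω ∂P) < ENNReal.ofReal (c/(4*K)) →
      (1/(n:ℝ)) * ∑ i ∈ Finset.Icc k (Nat.floor ((n:ℝ)*t)),
        (lqNorm P q (modCont σ ((i:ℝ)/n) (ε + |a n|))) ^ α ≤ c/4 + c/4 := by
    intro n hn1 han hFnlt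
    have hnR : (1:ℝ) ≤ n := by exact_mod_cast hn1
    have hnpos : (0:ℝ) < n := by linarith
    set η' := ε + |a n| with hη'def
    have hη'0 : 0 < η' := add_pos_of_pos_of_nonneg hε (abs_nonneg _)
    have hη'2ε : η' ≤ 2*ε := by rw [hη'def]; linarith
    have hη'δ : η' ≤ δ := by linarith
    set I := Finset.Icc k (Nat.floor ((n:ℝ)*t)) with hIdef
    have hint : ∀ η₀ : ℝ, 0 ≤ η₀ → η₀ ≤ δ → ∀ i : ℕ,
        Integrable (fun ω => (modCont σ ((i:ℝ)/n) η₀ ω) ^ q) P := by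
      intro η₀ h0 hδ' i
      refine (integrable_const ((M+M)^q)).mono'
        ((mc_meas η₀ h0 hδ' n i).pow measurable_const).aestronglyMeasurable
        (ae_of_all _ (fun ω => ?_))
      rw [Real.norm_eq_abs,
        abs_of_nonneg (Real.rpow_nonneg (mc_nonneg η₀ h0 hδ' n i ω) q)]
      exact Real.rpow_le_rpow (mc_nonneg η₀ h0 hδ' n i ω) (mc_le η₀ h0 hδ' n i ω) hq.le
    have hterm : ∀ i ∈ I, (lqNorm P q (modCont σ ((i:ℝ)/n) η')) ^ α ≤
        τ^β + K * (∫ ω, (modCont σ ((i:ℝ)/n) (2*ε) ω)^q ∂P) := by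
      intro i _
      set x := ∫ ω, (modCont σ ((i:ℝ)/n) η' ω)^q ∂P with hxdef
      have hx0 : 0 ≤ x :=
        integral_nonneg fun ω => Real.rpow_nonneg (mc_nonneg η' hη'0.le hη'δ n i ω) q
      have hxB : x ≤ B' := by
        rw [hxdef, hB'def]
        calc ∫ ω, (modCont σ ((i:ℝ)/n) η' ω)^q ∂P ≤ ∫ _ω, ((M+M)^q : ℝ) ∂P :=
            integral_mono (hint η' hη'0.le hη'δ i) (integrable_const _)
              (fun ω => Real.rpow_le_rpow (mc_nonneg η' hη'0.le hη'δ n i ω)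
                (mc_le η' hη'0.le hη'δ n i ω) hq.le)
          _ = (M+M)^q := by simp [measure_univ]
      have hxy : x ≤ ∫ ω, (modCont σ ((i:ℝ)/n) (2*ε) ω)^q ∂P :=
        integral_mono (hint η' hη'0.le hη'δ i) (hint (2*ε) (by linarith) h2εδ' i)
          (fun ω => Real.rpow_le_rpow (mc_nonneg η' hη'0.le hη'δ n i ω)
            (mc_mono η' (2*ε) hη'0.le hη'2ε h2εδ' n i ω) hq.le)
      have hlq : lqNorm P q (modCont σ ((i:ℝ)/n) η') = x ^ (1/q) := by
        rw [lqNorm, hxdef]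
        congr 1
        refine integral_congr_ae (ae_of_all _ (fun ω => ?_))
        show |modCont σ ((i:ℝ)/n) η' ω| ^ q = modCont σ ((i:ℝ)/n) η' ω ^ q
        rw [abs_of_nonneg (mc_nonneg η' hη'0.le hη'δ n i ω)]
      have hpow : (lqNorm P q (modCont σ ((i:ℝ)/n) η')) ^ α = x ^ β := by
        rw [hlq, ← Real.rpow_mul hx0, show 1/q*α = β from by rw [hβdef]; ring]
      rw [hpow]
      have h8 := rpow_le_aux hβ hτ hx0 hxB
      have h9 : K * x ≤ K * (∫ ω, (modCont σ ((i:ℝ)/n) (2*ε) ω)^q ∂P) :=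
        mul_le_mul_of_nonneg_left hxy hK.le
      rw [← hKdef] at h8
      linarith
    have hsum : (1/(n:ℝ)) * ∑ i ∈ I, (lqNorm P q (modCont σ ((i:ℝ)/n) η')) ^ α ≤
        (1/(n:ℝ)) * ((I.card : ℝ) * τ^β)
          + K * ((1/(n:ℝ)) * ∑ i ∈ I, ∫ ω, (modCont σ ((i:ℝ)/n) (2*ε) ω)^q ∂P) := by
      have h1 := Finset.sum_le_sum hterm
      have h2 : ∑ _i ∈ I, (τ^β + K * (∫ ω, (modCont σ ((_i:ℝ)/n) (2*ε) ω)^q ∂P))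
          = (I.card:ℝ)*τ^β + K * ∑ i ∈ I, ∫ ω, (modCont σ ((i:ℝ)/n) (2*ε) ω)^q ∂P := by
        rw [Finset.sum_add_distrib, Finset.sum_const, nsmul_eq_mul, ← Finset.mul_sum]
      calc (1/(n:ℝ)) * ∑ i ∈ I, (lqNorm P q (modCont σ ((i:ℝ)/n) η')) ^ α
          ≤ (1/(n:ℝ)) * ((I.card:ℝ)*τ^β
              + K * ∑ i ∈ I, ∫ ω, (modCont σ ((i:ℝ)/n) (2*ε) ω)^q ∂P) := by
            refine mul_le_mul_of_nonneg_left ?_ (by positivity)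
            rw [← h2]
            exact h1
        _ = (1/(n:ℝ)) * ((I.card : ℝ) * τ^β)
              + K * ((1/(n:ℝ)) * ∑ i ∈ I, ∫ ω, (modCont σ ((i:ℝ)/n) (2*ε) ω)^q ∂P) := by
            ring
    have hSreq : (1/(n:ℝ)) * ∑ i ∈ I, ∫ ω, (modCont σ ((i:ℝ)/n) (2*ε) ω)^q ∂P
        = (∫⁻ ω, Fn ε n ω ∂P).toReal := by
      have h1 : ∫ ω, Sr ε n ω ∂P
          = (1/(n:ℝ)) * ∑ i ∈ I, ∫ ω, (modCont σ ((i:ℝ)/n) (2*ε) ω)^q ∂P := by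
        simp only [hSrdef]
        rw [integral_const_mul, integral_finset_sum I (fun i _ => hint (2*ε) (by linarith) h2εδ' i)]
      have h2 : ∫ ω, Sr ε n ω ∂P = (∫⁻ ω, ENNReal.ofReal (Sr ε n ω) ∂P).toReal := by
        rw [MeasureTheory.integral_eq_lintegral_of_nonneg_ae
          (ae_of_all _ (fun ω => hSr_nonneg ε hε.le h2εδ' n ω))
          (hSr_meas ε hε.le h2εδ' n).aestronglyMeasurable]
      rw [← h1, h2]
    have hlast : K * ((1/(n:ℝ)) * ∑ i ∈ I, ∫ ω, (modCont σ ((i:ℝ)/n) (2*ε) ω)^q ∂P)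
        ≤ c/4 := by
      rw [hSreq]
      have h1 : (∫⁻ ω, Fn ε n ω ∂P).toReal < c/(4*K) :=
        ENNReal.toReal_lt_of_lt_ofReal hFnlt
      calc K * (∫⁻ ω, Fn ε n ω ∂P).toReal ≤ K * (c/(4*K)) :=
          mul_le_mul_of_nonneg_left h1.le hK.le
        _ = c/4 := by field_simp
    have hfirst : (1/(n:ℝ)) * ((I.card:ℝ) * τ^β) ≤ c/4 := by
      have h2 : (0:ℝ) < τ^β := Real.rpow_pos_of_pos hτ _
      calc (1/(n:ℝ)) * ((I.card:ℝ) * τ^β) = ((1/(n:ℝ)) * (I.card:ℝ)) * τ^β := by ring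
        _ ≤ (t+1) * τ^β := mul_le_mul_of_nonneg_right (hcard n hn1) h2.le
        _ = c/4 := by
            rw [hτβ]
            field_simp
    calc (1/(n:ℝ)) * ∑ i ∈ I, (lqNorm P q (modCont σ ((i:ℝ)/n) η')) ^ α
        ≤ (1/(n:ℝ)) * ((I.card : ℝ) * τ^β)
          + K * ((1/(n:ℝ)) * ∑ i ∈ I, ∫ ω, (modCont σ ((i:ℝ)/n) (2*ε) ω)^q ∂P) := hsum
      _ ≤ c/4 + c/4 := add_le_add hfirst hlast
  have hkey : ∀ᶠ n : ℕ in atTop, (1/(n:ℝ)) *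
      ∑ i ∈ Finset.Icc k (Nat.floor ((n:ℝ)*t)),
        (lqNorm P q (modCont σ ((i:ℝ)/n) (ε + |a n|))) ^ α ≤ c/4 + c/4 := by
    filter_upwards [hev1, hev2, eventually_ge_atTop 1] with n h1 h2 h3
    exact hchain n h3 h2 h1
  have hΛle : limsup (fun n : ℕ => (1/(n:ℝ)) *
      ∑ i ∈ Finset.Icc k (Nat.floor ((n:ℝ)*t)),
        (lqNorm P q (modCont σ ((i:ℝ)/n) (ε + |a n|))) ^ α) atTop ≤ c/4 + c/4 :=
    limsup_le_of_le (isCoboundedUnder_le_of_le atTop hu_nonneg) hkey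
  have hΛge : 0 ≤ limsup (fun n : ℕ => (1/(n:ℝ)) *
      ∑ i ∈ Finset.Icc k (Nat.floor ((n:ℝ)*t)),
        (lqNorm P q (modCont σ ((i:ℝ)/n) (ε + |a n|))) ^ α) atTop :=
    le_limsup_of_frequently_le (Frequently.of_forall hu_nonneg)
      (isBoundedUnder_of_eventually_le hkey)
  rw [Real.dist_eq, sub_zero, abs_of_nonneg hΛge]
  linarith

end
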